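/- Power-law tail bound: for a > 1 and integers 1 ≤ t < d, the ratio (Σ_{i=t+1}^{d} i^{−a}) / (Σ_{i=1}^{d} i^{−a}) is at most max(2/(t+1)^a, 2/((a−1)(t+1)^{a−1})). -/

import Mathlib

open BigOperators Finset

lemma tail_sum_le (a : ℝ) (ha : 1 < a) (t d : ℕ) (htd : t < d) :
    (∑ i ∈ Finset.Icc (t + 2) d, (i : ℝ) ^ (-a)) ≤
      ((t : ℝ) + 1) ^ (1 - a) / (a - 1) := by
  have hcast : ((t : ℝ) + 1) = ((t + 1 : ℕ) : ℝ) := by push_cast; ring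
  have hpos : (0 : ℝ) < (t : ℝ) + 1 := by positivity
  have hanti : AntitoneOn (fun x : ℝ => x ^ (-a)) (Set.Icc ((t + 1 : ℕ) : ℝ) ((d : ℕ) : ℝ)) := by
    intro x hx y hy hxy
    have hx0 : (0 : ℝ) < x := lt_of_lt_of_le (by rw [← hcast]; exact hpos) hx.1
    exact Real.rpow_le_rpow_of_nonpos hx0 hxy (by linarith)
  have hsum : (∑ i ∈ Finset.Ico (t + 1) d, ((i + 1 : ℕ) : ℝ) ^ (-a)) ≤
      ∫ x in ((t + 1 : ℕ) : ℝ)..((d : ℕ) : ℝ), x ^ (-a) :=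
    AntitoneOn.sum_le_integral_Ico (by omega) hanti
  have hint : (∫ x in ((t + 1 : ℕ) : ℝ)..((d : ℕ) : ℝ), x ^ (-a)) =
      (((d : ℕ) : ℝ) ^ (-a + 1) - ((t + 1 : ℕ) : ℝ) ^ (-a + 1)) / (-a + 1) := by
    apply integral_rpow
    right
    constructor
    · intro h; linarith
    · rw [Set.uIcc_of_le (by exact_mod_cast Nat.le_of_lt_succ (by omega))]
      intro hmem
      have : (1 : ℝ) ≤ ((t + 1 : ℕ) : ℝ) := by exact_mod_cast Nat.le_add_left 1 t
      have := hmem.1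
      linarith
  have hd0 : (0 : ℝ) ≤ ((d : ℕ) : ℝ) ^ (-a + 1) := Real.rpow_nonneg (by positivity) _
  have hmap : Finset.Icc (t + 2) d = Finset.map ⟨fun i => i + 1, fun x y h => by simpa using h⟩
      (Finset.Ico (t + 1) d) := by
    ext x
    simp only [Finset.mem_Icc, Finset.mem_map, Finset.mem_Ico, Function.Embedding.coeFn_mk]
    constructor
    · intro h; exact ⟨x - 1, by omega, by change x - 1 + 1 = x; omega⟩
    · rintro ⟨y, hy, rfl⟩; show t + 2 ≤ y + 1 ∧ y + 1 ≤ d; omega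
  have heq : (∑ i ∈ Finset.Icc (t + 2) d, (i : ℝ) ^ (-a)) =
      ∑ i ∈ Finset.Ico (t + 1) d, ((i + 1 : ℕ) : ℝ) ^ (-a) := by
    rw [hmap, Finset.sum_map]
    rfl
  rw [heq]
  refine hsum.trans ?_
  rw [hint, ← hcast]
  have ha1 : (0 : ℝ) < a - 1 := by linarith
  have e : (-a + 1 : ℝ) = 1 - a := by ring
  have key : ∀ X Y : ℝ, (Y - X) / (1 - a) = (X - Y) / (a - 1) := by
    intro X Y
    rw [show (1 - a : ℝ) = -(a - 1) by ring, div_neg]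
    ring
  rw [e, key]
  rw [e] at hd0
  gcongr
  linarith

/-- Power-law tail bound: for `a > 1` and integers `1 ≤ t < d`,
`(Σ_{i=t+1}^d i^{-a}) / (Σ_{i=1}^d i^{-a}) ≤ max(2/(t+1)^a, 2/((a-1)(t+1)^{a-1}))`. -/
theorem powerlaw_tail_ratio (a : ℝ) (ha : 1 < a) (t d : ℕ) (ht : 1 ≤ t) (htd : t < d) :
    (∑ i ∈ Finset.Icc (t + 1) d, (i : ℝ) ^ (-a)) /
        (∑ i ∈ Finset.Icc 1 d, (i : ℝ) ^ (-a)) ≤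
      max (2 / ((t : ℝ) + 1) ^ a) (2 / ((a - 1) * ((t : ℝ) + 1) ^ (a - 1))) := by
  have hpos : (0 : ℝ) < (t : ℝ) + 1 := by positivity
  -- denominator ≥ 1
  have hden : (1 : ℝ) ≤ ∑ i ∈ Finset.Icc 1 d, (i : ℝ) ^ (-a) := by
    have h1 : (1 : ℕ) ∈ Finset.Icc 1 d := by simp; omega
    calc (1 : ℝ) = ((1 : ℕ) : ℝ) ^ (-a) := by simp
    _ ≤ ∑ i ∈ Finset.Icc 1 d, (i : ℝ) ^ (-a) :=
      Finset.single_le_sum (fun i _ => Real.rpow_nonneg (Nat.cast_nonneg i) _) h1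
  have hnum0 : (0 : ℝ) ≤ ∑ i ∈ Finset.Icc (t + 1) d, (i : ℝ) ^ (-a) :=
    Finset.sum_nonneg fun i _ => Real.rpow_nonneg (Nat.cast_nonneg i) _
  have hsplit : (∑ i ∈ Finset.Icc (t + 1) d, (i : ℝ) ^ (-a)) =
      ((t + 1 : ℕ) : ℝ) ^ (-a) + ∑ i ∈ Finset.Icc (t + 2) d, (i : ℝ) ^ (-a) := by
    rw [show Finset.Icc (t + 1) d = insert (t + 1) (Finset.Icc (t + 2) d) from ?_,
      Finset.sum_insert (by simp)]
    ext x; simp only [Finset.mem_Icc, Finset.mem_insert]; omega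
  have hnum : (∑ i ∈ Finset.Icc (t + 1) d, (i : ℝ) ^ (-a)) ≤
      ((t : ℝ) + 1) ^ (-a) + ((t : ℝ) + 1) ^ (1 - a) / (a - 1) := by
    rw [hsplit]
    have := tail_sum_le a ha t d htd
    have hc : ((t + 1 : ℕ) : ℝ) = (t : ℝ) + 1 := by push_cast; ring
    rw [hc]
    linarith
  have hmax1 : 2 / ((t : ℝ) + 1) ^ a = 2 * ((t : ℝ) + 1) ^ (-a) := by
    rw [Real.rpow_neg hpos.le]; ring
  have hmax2 : 2 / ((a - 1) * ((t : ℝ) + 1) ^ (a - 1)) =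
      2 * (((t : ℝ) + 1) ^ (1 - a) / (a - 1)) := by
    rw [show (1 - a : ℝ) = -(a - 1) by ring, Real.rpow_neg hpos.le]
    have : ((t : ℝ) + 1) ^ (a - 1) ≠ 0 := ne_of_gt (Real.rpow_pos_of_pos hpos _)
    field_simp
  calc (∑ i ∈ Finset.Icc (t + 1) d, (i : ℝ) ^ (-a)) /
        (∑ i ∈ Finset.Icc 1 d, (i : ℝ) ^ (-a))
      ≤ ∑ i ∈ Finset.Icc (t + 1) d, (i : ℝ) ^ (-a) := div_le_self hnum0 hden
    _ ≤ ((t : ℝ) + 1) ^ (-a) + ((t : ℝ) + 1) ^ (1 - a) / (a - 1) := hnum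
    _ ≤ max (2 / ((t : ℝ) + 1) ^ a) (2 / ((a - 1) * ((t : ℝ) + 1) ^ (a - 1))) := by
        rw [hmax1, hmax2]
        rcases le_total (((t : ℝ) + 1) ^ (-a)) (((t : ℝ) + 1) ^ (1 - a) / (a - 1)) with h | h
        · exact le_max_of_le_right (by linarith)
        · exact le_max_of_le_left (by linarith)
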